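/- For every positive integer n, the polynomial P_n(X) = X^4 - (6+n)X^3 + (10+n)X^2 - (6+n)X + 1 is irreducible over ℚ. -/

import Mathlib

open Polynomial

noncomputable def qpoly (N : ℤ) : ℤ[X] :=
  X^4 - C (6+N) * X^3 + C (10+N) * X^2 - C (6+N) * X + 1

lemma qpoly_natDegree (N : ℤ) : (qpoly N).natDegree = 4 := by
  unfold qpoly; compute_degree!

lemma qpoly_monic (N : ℤ) : (qpoly N).Monic := by
  unfold qpoly; monicity!

lemma no_sq (N : ℤ) (hN : 1 ≤ N) (d : ℤ) : d^2 ≠ N^2 + 8*N + 4 := by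
  intro h
  have h1 : |d|^2 = N^2+8*N+4 := by rwa [sq_abs]
  have ha := abs_nonneg d
  have h2 : |d| < N + 4 := by nlinarith
  have h3 : N + 2 < |d| := by nlinarith
  have h4 : |d| = N + 3 := by omega
  rw [h4] at h1
  have h5 : 2*N = 5 := by nlinarith
  omega

lemma monic_two (f : ℤ[X]) (hf : f.Monic) (h2 : f.natDegree = 2) :
    f = X^2 + C (f.coeff 1) * X + C (f.coeff 0) := by
  have hlead : f.coeff 2 = 1 := by
    have := hf.coeff_natDegree; rwa [h2] at this
  ext k
  match k with
  | 0 => simp [coeff_X_pow, coeff_C, coeff_C_mul, -eq_intCast]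
  | 1 => simp [coeff_X_pow, coeff_C, coeff_C_mul, -eq_intCast]
  | 2 => simp [hlead, coeff_X_pow, coeff_C, coeff_C_mul, -eq_intCast]
  | (k+3) =>
    have h0 : f.coeff (k+3) = 0 := coeff_eq_zero_of_natDegree_lt (by omega)
    simp [h0, coeff_X_pow, coeff_C, coeff_C_mul, -eq_intCast]

lemma no_lin (N : ℤ) (hN : 1 ≤ N) (f g : ℤ[X]) (hf : f.Monic)
    (hdeg : f.natDegree = 1) (h : qpoly N = f * g) : False := by
  obtain ⟨r, hr⟩ : ∃ r, r = -f.coeff 0 := ⟨_, rfl⟩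
  have hfr : f.eval r = 0 := by
    rw [hf.eq_X_add_C hdeg]; simp [hr]
  have hq : (qpoly N).eval r = 0 := by
    rw [h, eval_mul, hfr, zero_mul]
  have hroot : r^4 - (6+N)*r^3 + (10+N)*r^2 - (6+N)*r + 1 = 0 := by
    simpa [qpoly] using hq
  have hunit : (-r) * (r^3 - (6+N)*r^2 + (10+N)*r - (6+N)) = 1 := by
    linear_combination -hroot
  have := Int.isUnit_iff.mp (IsUnit.of_mul_eq_one _ hunit)
  have hr1 : r = -1 ∨ r = 1 := by omega
  rcases hr1 with h1 | h1 <;> rw [h1] at hroot <;> norm_num at hroot <;> omega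

lemma no_quad (N : ℤ) (hN : 1 ≤ N) (f g : ℤ[X]) (hf : f.Monic) (hg : g.Monic)
    (hdf : f.natDegree = 2) (hdg : g.natDegree = 2) (h : qpoly N = f * g) : False := by
  set a := f.coeff 1; set b := f.coeff 0; set c := g.coeff 1; set d := g.coeff 0
  rw [monic_two f hf hdf, monic_two g hg hdg] at h
  have expand : (X^2 + C a * X + C b) * (X^2 + C c * X + C d)
      = X^4 + C (a+c) * X^3 + C (b+d+a*c) * X^2 + C (a*d+b*c) * X + C (b*d) := by
    simp only [C_add, C_mul]; ring
  rw [expand] at h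
  have hq : qpoly N = X^4 + C (-(6+N)) * X^3 + C (10+N) * X^2 + C (-(6+N)) * X + C 1 := by
    simp only [qpoly, C_neg, C_1]; ring
  rw [hq] at h
  have e0 := congrArg (fun p : ℤ[X] => p.coeff 0) h
  have e1 := congrArg (fun p : ℤ[X] => p.coeff 1) h
  have e2 := congrArg (fun p : ℤ[X] => p.coeff 2) h
  have e3 := congrArg (fun p : ℤ[X] => p.coeff 3) h
  simp only [coeff_add, coeff_C_mul, coeff_X_pow, coeff_C, coeff_X] at e0 e1 e2 e3
  norm_num at e0 e1 e2 e3
  rcases Int.mul_eq_one_iff_eq_one_or_neg_one.mp e0.symm with ⟨hb, hd⟩ | ⟨hb, hd⟩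
  · rw [hb, hd] at e1 e2
    have h1 : a + c = -(6+N) := by linarith
    have h2 : a * c = 8 + N := by linarith
    exact no_sq N hN (a - c) (by linear_combination (a + c - 6 - N) * h1 - 4 * h2)
  · rw [hb, hd] at e1
    omega

lemma key (N : ℤ) (hN : 1 ≤ N) (f g : ℤ[X]) (hf : f.Monic) (hg : g.Monic)
    (h : qpoly N = f * g) : f.natDegree = 0 ∨ g.natDegree = 0 := by
  have hdeg : f.natDegree + g.natDegree = 4 := by
    rw [← natDegree_mul hf.ne_zero hg.ne_zero, ← h, qpoly_natDegree]
  have hc : f.natDegree = 0 ∨ f.natDegree = 1 ∨ f.natDegree = 2 ∨ f.natDegree = 3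
      ∨ f.natDegree = 4 := by omega
  rcases hc with h1 | h1 | h1 | h1 | h1
  · exact Or.inl h1
  · exact (no_lin N hN f g hf h1 h).elim
  · exact (no_quad N hN f g hf hg h1 (by omega) h).elim
  · exact (no_lin N hN g f hg (by omega) (by rwa [mul_comm] at h)).elim
  · exact Or.inr (by omega)

lemma qpoly_irred (N : ℤ) (hN : 1 ≤ N) : Irreducible (qpoly N) := by
  constructor
  · exact not_isUnit_of_natDegree_pos _ (by rw [qpoly_natDegree]; norm_num)
  · intro f g hfg
    have hl : f.leadingCoeff * g.leadingCoeff = 1 := by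
      rw [← leadingCoeff_mul, ← hfg]; exact qpoly_monic N
    have isunit_of_deg0 : ∀ p : ℤ[X], p.leadingCoeff = 1 ∨ p.leadingCoeff = -1 →
        p.natDegree = 0 → IsUnit p := by
      intro p hp h0
      rw [eq_C_of_natDegree_eq_zero h0]
      have : p.coeff 0 = p.leadingCoeff := by rw [leadingCoeff, h0]
      rw [isUnit_C, this]
      exact Int.isUnit_iff.mpr hp
    rcases Int.mul_eq_one_iff_eq_one_or_neg_one.mp hl with ⟨h1, h2⟩ | ⟨h1, h2⟩
    · rcases key N hN f g h1 h2 hfg with h | h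
      · exact Or.inl (isunit_of_deg0 f (Or.inl h1) h)
      · exact Or.inr (isunit_of_deg0 g (Or.inl h2) h)
    · have hf : (-f).Monic := by
        unfold Polynomial.Monic; rw [leadingCoeff_neg, h1]; ring
      have hg : (-g).Monic := by
        unfold Polynomial.Monic; rw [leadingCoeff_neg, h2]; ring
      rcases key N hN (-f) (-g) hf hg (by rw [neg_mul_neg]; exact hfg) with h | h
      · rw [natDegree_neg] at h
        exact Or.inl (isunit_of_deg0 f (Or.inr h1) h)
      · rw [natDegree_neg] at h
        exact Or.inr (isunit_of_deg0 g (Or.inr h2) h)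

/-- `P_n(X) = X^4 - (6+n)X^3 + (10+n)X^2 - (6+n)X + 1` is irreducible over `ℚ`. -/
theorem stmt6 (n : ℕ) (hn : 0 < n) :
    Irreducible
      (X^4 - C ((6:ℚ)+n) * X^3 + C ((10:ℚ)+n) * X^2 - C ((6:ℚ)+n) * X + 1 :
        Polynomial ℚ) := by
  have hN : 1 ≤ (n : ℤ) := by exact_mod_cast hn
  have hirr := qpoly_irred (n : ℤ) hN
  have hmap : (qpoly (n : ℤ)).map (Int.castRingHom ℚ)
      = (X^4 - C ((6:ℚ)+n) * X^3 + C ((10:ℚ)+n) * X^2 - C ((6:ℚ)+n) * X + 1 :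
        Polynomial ℚ) := by
    simp only [qpoly, Polynomial.map_add, Polynomial.map_sub, Polynomial.map_mul,
      Polynomial.map_pow, Polynomial.map_X, Polynomial.map_C, Polynomial.map_one]
    have h6 : ((Int.castRingHom ℚ) (6 + (n:ℤ))) = (6:ℚ)+n := by simp [eq_intCast]
    have h10 : ((Int.castRingHom ℚ) (10 + (n:ℤ))) = (10:ℚ)+n := by simp [eq_intCast]
    rw [h6, h10]
  rw [← hmap]
  exact (IsPrimitive.Int.irreducible_iff_irreducible_map_cast
    (qpoly_monic (n : ℤ)).isPrimitive).mp hirr
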